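/- arXiv:2303.11053 — 6 statements merged into one kernel-verified Lean document; each statement's English description precedes it below -/
import Mathlib

section
/- In a bipartite graph between agents and categories where all edges incident to an agent a have the same positive weight w(a), every maximum-weight b-matching of size at most s is also a maximum-size b-matching among those of size at most s. -/
/-- A b-matching in the bipartite graph with edge set `E` between agents `A`
and categories `C`: each agent matched at most once, each category `c`
matched at most `b c` times. -/
def IsBMatching {A C : Type*} [DecidableEq A] [DecidableEq C]
    (E M : Finset (A × C)) (b : C → ℕ) : Prop :=
  M ⊆ E ∧ (∀ a : A, (M.filter (fun e => e.1 = a)).card ≤ 1) ∧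
    (∀ c : C, (M.filter (fun e => e.2 = c)).card ≤ b c)

section Aux

variable {A C : Type*} [DecidableEq A] [DecidableEq C]

private lemma card_image_fst (M : Finset (A × C))
    (h : ∀ a : A, (M.filter (fun e => e.1 = a)).card ≤ 1) :
    (M.image Prod.fst).card = M.card := by
  apply Finset.card_image_of_injOn
  intro e he f hf hef
  have heM : e ∈ M := he
  have hfM : f ∈ M := hf
  have h1 : e ∈ M.filter (fun x => x.1 = e.1) := Finset.mem_filter.mpr ⟨heM, rfl⟩
  have h2 : f ∈ M.filter (fun x => x.1 = e.1) := Finset.mem_filter.mpr ⟨hfM, hef.symm⟩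
  exact (Finset.card_le_one.mp (h e.1) f h2 e h1).symm

/-- Augmentation lemma: given two b-matchings with `M.card < M'.card`, there is
a b-matching `N ⊆ M ∪ M'` of size `M.card + 1` matching every agent
that `M` matches. -/
private lemma aug (E : Finset (A × C)) :
    ∀ n (b : C → ℕ) (M M' : Finset (A × C)), M.card = n →
      IsBMatching E M b → IsBMatching E M' b → M.card < M'.card →
      ∃ N : Finset (A × C), IsBMatching E N b ∧ N ⊆ M ∪ M' ∧
        N.card = M.card + 1 ∧ ∀ e ∈ M, ∃ c', (e.1, c') ∈ N := by
  intro n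
  induction n using Nat.strong_induction_on with
  | _ n ih =>
    intro b M M' hn hM hM' hlt
    obtain ⟨hME, hMa, hMc⟩ := hM
    obtain ⟨hM'E, hM'a, hM'c⟩ := hM'
    -- find an agent matched in M' but not in M
    have himM : (M.image Prod.fst).card = M.card := card_image_fst M hMa
    have himM' : (M'.image Prod.fst).card = M'.card := card_image_fst M' hM'a
    have hex : ∃ a0, a0 ∈ M'.image Prod.fst ∧ a0 ∉ M.image Prod.fst := by
      by_contra hcon
      push_neg at hcon
      have hsub : M'.image Prod.fst ⊆ M.image Prod.fst := fun a ha => hcon a ha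
      have := Finset.card_le_card hsub
      omega
    obtain ⟨a0, ha0', ha0⟩ := hex
    obtain ⟨e0, he0M', he0a⟩ := Finset.mem_image.mp ha0'
    set c := e0.2 with hc
    have he0 : e0 = (a0, c) := by
      rw [← he0a, hc]
    have ha0un : ∀ x, (a0, x) ∉ M := by
      intro x hxM
      exact ha0 (Finset.mem_image.mpr ⟨(a0, x), hxM, rfl⟩)
    by_cases hfree : (M.filter (fun e => e.2 = c)).card < b c
    · -- Case A: category c has free capacity in M
      refine ⟨insert (a0, c) M, ⟨?_, ?_, ?_⟩, ?_, ?_, ?_⟩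
      · exact Finset.insert_subset (hM'E (he0 ▸ he0M')) hME
      · intro a
        rw [Finset.filter_insert]
        by_cases ha : a0 = a
        · subst ha
          simp only [if_pos rfl]
          have : M.filter (fun e => e.1 = a0) = ∅ := by
            rw [Finset.filter_eq_empty_iff]
            intro e heM hea
            have hee : (a0, e.2) = e := by rw [← hea]
            exact ha0un e.2 (hee ▸ heM)
          rw [this]
          simp
        · rw [if_neg (by simpa using ha)]
          exact hMa a
      · intro c'
        rw [Finset.filter_insert]
        by_cases hcc : c = c'
        · subst hcc
          rw [if_pos rfl]
          calc (insert (a0, c) (M.filter (fun e => e.2 = c))).card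
              ≤ (M.filter (fun e => e.2 = c)).card + 1 := Finset.card_insert_le _ _
            _ ≤ b c := by omega
        · rw [if_neg (by simpa using hcc)]
          exact hMc c'
      · exact Finset.insert_subset (Finset.mem_union_right _ (he0 ▸ he0M'))
          Finset.subset_union_left
      · rw [Finset.card_insert_of_notMem (ha0un c)]
      · intro e heM
        exact ⟨e.2, Finset.mem_insert_of_mem (by rwa [Prod.mk.eta])⟩
    · -- Case B: category c is saturated in M
      push_neg at hfree
      have he0c : (a0, c) ∈ M'.filter (fun e => e.2 = c) := by
        rw [Finset.mem_filter]
        exact ⟨he0 ▸ he0M', rfl⟩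
      have hbc1 : 1 ≤ b c := by
        have := hM'c c
        have : 1 ≤ (M'.filter (fun e => e.2 = c)).card :=
          Finset.card_pos.mpr ⟨(a0, c), he0c⟩
        omega
      -- find an edge (a1, c) ∈ M \ M'
      have hexf : ∃ f ∈ M.filter (fun e => e.2 = c), f ∉ M'.filter (fun e => e.2 = c) := by
        by_contra hcon
        push_neg at hcon
        have hsub : insert (a0, c) (M.filter (fun e => e.2 = c)) ⊆
            M'.filter (fun e => e.2 = c) := by
          apply Finset.insert_subset he0c hcon
        have hnm : (a0, c) ∉ M.filter (fun e => e.2 = c) := by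
          intro h
          exact ha0un c (Finset.mem_filter.mp h).1
        have h1 := Finset.card_le_card hsub
        rw [Finset.card_insert_of_notMem hnm] at h1
        have := hM'c c
        omega
      obtain ⟨f, hfMc, hfM'c⟩ := hexf
      have hfM : f ∈ M := (Finset.mem_filter.mp hfMc).1
      have hfc : f.2 = c := (Finset.mem_filter.mp hfMc).2
      have hfM' : f ∉ M' := fun h => hfM'c (Finset.mem_filter.mpr ⟨h, hfc⟩)
      set a1 := f.1 with ha1
      have hf : f = (a1, c) := by rw [ha1, ← hfc]
      set b₁ : C → ℕ := Function.update b c (b c - 1) with hb₁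
      set M₁ := M.erase f with hM₁
      set M₁' := M'.erase (a0, c) with hM₁'
      have hcardM₁ : M₁.card = M.card - 1 := Finset.card_erase_of_mem hfM
      have hcardM₁' : M₁'.card = M'.card - 1 :=
        Finset.card_erase_of_mem (he0 ▸ he0M')
      have hMpos : 1 ≤ M.card := Finset.card_pos.mpr ⟨f, hfM⟩
      have hb₁c : b₁ c = b c - 1 := Function.update_self c _ b
      have hb₁ne : ∀ c', c' ≠ c → b₁ c' = b c' := fun c' h =>
        Function.update_of_ne h _ b
      -- M₁ is a b₁-matching
      have hM₁b : IsBMatching E M₁ b₁ := by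
        refine ⟨(Finset.erase_subset _ _).trans hME, ?_, ?_⟩
        · intro a
          exact le_trans (Finset.card_le_card
            (Finset.filter_subset_filter _ (Finset.erase_subset _ _))) (hMa a)
        · intro c'
          by_cases hcc : c' = c
          · subst hcc
            have heq : M₁.filter (fun e => e.2 = c) = (M.filter (fun e => e.2 = c)).erase f := by
              rw [hM₁, Finset.filter_erase]
            rw [heq, Finset.card_erase_of_mem hfMc, hb₁c]
            have := hMc c
            omega
          · rw [hb₁ne c' hcc]
            exact le_trans (Finset.card_le_card
              (Finset.filter_subset_filter _ (Finset.erase_subset _ _))) (hMc c')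
      -- M₁' is a b₁-matching
      have hM₁'b : IsBMatching E M₁' b₁ := by
        refine ⟨(Finset.erase_subset _ _).trans hM'E, ?_, ?_⟩
        · intro a
          exact le_trans (Finset.card_le_card
            (Finset.filter_subset_filter _ (Finset.erase_subset _ _))) (hM'a a)
        · intro c'
          by_cases hcc : c' = c
          · subst hcc
            have heq : M₁'.filter (fun e => e.2 = c) =
                (M'.filter (fun e => e.2 = c)).erase (a0, c) := by
              rw [hM₁', Finset.filter_erase]
            rw [heq, Finset.card_erase_of_mem he0c, hb₁c]
            have := hM'c c
            omega
          · rw [hb₁ne c' hcc]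
            exact le_trans (Finset.card_le_card
              (Finset.filter_subset_filter _ (Finset.erase_subset _ _))) (hM'c c')
      have hltn : M₁.card < n := by omega
      have hlt₁ : M₁.card < M₁'.card := by omega
      obtain ⟨N₁, hN₁b, hN₁sub, hN₁card, hN₁cov⟩ :=
        ih M₁.card hltn b₁ M₁ M₁' rfl hM₁b hM₁'b hlt₁
      obtain ⟨hN₁E, hN₁a, hN₁c⟩ := hN₁b
      -- a0 is unmatched in N₁
      have ha0N₁ : ∀ x, (a0, x) ∉ N₁ := by
        intro x hx
        rcases Finset.mem_union.mp (hN₁sub hx) with h | h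
        · exact ha0un x (Finset.mem_of_mem_erase h)
        · have hxM' : (a0, x) ∈ M' := Finset.mem_of_mem_erase h
          have hne : (a0, x) ≠ (a0, c) := Finset.ne_of_mem_erase h
          have h1 : (a0, x) ∈ M'.filter (fun e => e.1 = a0) := by
            rw [Finset.mem_filter]; exact ⟨hxM', rfl⟩
          have h2 : (a0, c) ∈ M'.filter (fun e => e.1 = a0) := by
            rw [Finset.mem_filter]; exact ⟨he0 ▸ he0M', rfl⟩
          exact hne (Finset.card_le_one.mp (hM'a a0) _ h1 _ h2)
      have hN₁subMM' : N₁ ⊆ M ∪ M' := by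
        refine hN₁sub.trans (Finset.union_subset_union ?_ ?_) <;>
          exact Finset.erase_subset _ _
      have hN₁cardM : N₁.card = M.card := by omega
      -- capacity of c in N₁
      have hN₁capc : (N₁.filter (fun e => e.2 = c)).card ≤ b c - 1 := by
        have := hN₁c c
        rwa [hb₁c] at this
      by_cases ha1m : ∃ c', (a1, c') ∈ N₁
      · -- a1 is matched in N₁; add the edge (a0, c)
        refine ⟨insert (a0, c) N₁, ⟨?_, ?_, ?_⟩, ?_, ?_, ?_⟩
        · exact Finset.insert_subset (hM'E (he0 ▸ he0M')) hN₁E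
        · intro a
          rw [Finset.filter_insert]
          by_cases ha : a0 = a
          · subst ha
            rw [if_pos rfl]
            have : N₁.filter (fun e => e.1 = a0) = ∅ := by
              rw [Finset.filter_eq_empty_iff]
              intro e heN hea
              have hee : (a0, e.2) = e := by rw [← hea]
              exact ha0N₁ e.2 (hee ▸ heN)
            rw [this]
            simp
          · rw [if_neg (by simpa using ha)]
            exact hN₁a a
        · intro c'
          rw [Finset.filter_insert]
          by_cases hcc : c = c'
          · subst hcc
            rw [if_pos rfl]
            calc (insert (a0, c) (N₁.filter (fun e => e.2 = c))).card
                ≤ (N₁.filter (fun e => e.2 = c)).card + 1 := Finset.card_insert_le _ _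
              _ ≤ b c := by omega
          · rw [if_neg (by simpa using hcc)]
            have := hN₁c c'
            rwa [hb₁ne c' (fun h => hcc h.symm)] at this
        · exact Finset.insert_subset (Finset.mem_union_right _ (he0 ▸ he0M')) hN₁subMM'
        · rw [Finset.card_insert_of_notMem (ha0N₁ c)]
          omega
        · intro e heM
          by_cases hef : e = f
          · subst hef
            obtain ⟨c', hc'⟩ := ha1m
            exact ⟨c', Finset.mem_insert_of_mem hc'⟩
          · have heM₁ : e ∈ M₁ := Finset.mem_erase.mpr ⟨hef, heM⟩
            obtain ⟨c', hc'⟩ := hN₁cov e heM₁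
            exact ⟨c', Finset.mem_insert_of_mem hc'⟩
      · -- a1 is unmatched in N₁; add back the edge (a1, c)
        push_neg at ha1m
        refine ⟨insert (a1, c) N₁, ⟨?_, ?_, ?_⟩, ?_, ?_, ?_⟩
        · exact Finset.insert_subset (hME (hf ▸ hfM)) hN₁E
        · intro a
          rw [Finset.filter_insert]
          by_cases ha : a1 = a
          · subst ha
            rw [if_pos rfl]
            have : N₁.filter (fun e => e.1 = a1) = ∅ := by
              rw [Finset.filter_eq_empty_iff]
              intro e heN hea
              have hee : (a1, e.2) = e := by rw [← hea]
              exact ha1m e.2 (hee ▸ heN)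
            rw [this]
            simp
          · rw [if_neg (by simpa using ha)]
            exact hN₁a a
        · intro c'
          rw [Finset.filter_insert]
          by_cases hcc : c = c'
          · subst hcc
            rw [if_pos rfl]
            calc (insert (a1, c) (N₁.filter (fun e => e.2 = c))).card
                ≤ (N₁.filter (fun e => e.2 = c)).card + 1 := Finset.card_insert_le _ _
              _ ≤ b c := by omega
          · rw [if_neg (by simpa using hcc)]
            have := hN₁c c'
            rwa [hb₁ne c' (fun h => hcc h.symm)] at this
        · exact Finset.insert_subset (Finset.mem_union_left _ (hf ▸ hfM)) hN₁subMM'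
        · rw [Finset.card_insert_of_notMem (ha1m c)]
          omega
        · intro e heM
          by_cases hef : e = f
          · subst hef
            exact ⟨c, by rw [← ha1]; exact Finset.mem_insert_self _ _⟩
          · have heM₁ : e ∈ M₁ := Finset.mem_erase.mpr ⟨hef, heM⟩
            obtain ⟨c', hc'⟩ := hN₁cov e heM₁
            exact ⟨c', Finset.mem_insert_of_mem hc'⟩

end Aux

/-- If all edges incident to an agent `a` have the same positive weight `w a`,
then every maximum-weight b-matching of size at most `s` is also a
maximum-size b-matching among those of size at most `s`. -/
theorem maxWeight_is_maxSize {A C : Type*} [DecidableEq A] [DecidableEq C]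
    (E M : Finset (A × C)) (b : C → ℕ) (w : A → ℝ) (s : ℕ)
    (hw : ∀ a, 0 < w a)
    (hM : IsBMatching E M b) (hMs : M.card ≤ s)
    (hmaxW : ∀ M', IsBMatching E M' b → M'.card ≤ s →
      (∑ e ∈ M', w e.1) ≤ ∑ e ∈ M, w e.1) :
    ∀ M', IsBMatching E M' b → M'.card ≤ s → M'.card ≤ M.card := by
  intro M' hM' hM's
  by_contra hcon
  push_neg at hcon
  obtain ⟨N, hNb, _, hNcard, hNcov⟩ := aug E M.card b M M' rfl hM hM' hcon
  have hNs : N.card ≤ s := by omega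
  have hle := hmaxW N hNb hNs
  -- compare weights via images of agents
  have himM : (M.image Prod.fst).card = M.card := card_image_fst M hM.2.1
  have himN : (N.image Prod.fst).card = N.card := card_image_fst N hNb.2.1
  have hsub : M.image Prod.fst ⊆ N.image Prod.fst := by
    intro a ha
    obtain ⟨e, heM, hea⟩ := Finset.mem_image.mp ha
    obtain ⟨c', hc'⟩ := hNcov e heM
    exact Finset.mem_image.mpr ⟨(e.1, c'), hc', hea⟩
  have hexa : ∃ a, a ∈ N.image Prod.fst ∧ a ∉ M.image Prod.fst := by
    by_contra h
    push_neg at h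
    have : N.image Prod.fst ⊆ M.image Prod.fst := fun a ha => h a ha
    have := Finset.card_le_card this
    omega
  obtain ⟨a, haN, haM⟩ := hexa
  have hinjM : ∀ x ∈ M, ∀ y ∈ M, x.1 = y.1 → x = y := by
    intro x hx y hy hxy
    have h1 : x ∈ M.filter (fun e => e.1 = x.1) := by simp [hx]
    have h2 : y ∈ M.filter (fun e => e.1 = x.1) := by
      simp only [Finset.mem_filter]; exact ⟨hy, hxy.symm⟩
    exact Finset.card_le_one.mp (hM.2.1 x.1) x h1 y h2
  have hinjN : ∀ x ∈ N, ∀ y ∈ N, x.1 = y.1 → x = y := by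
    intro x hx y hy hxy
    have h1 : x ∈ N.filter (fun e => e.1 = x.1) := by simp [hx]
    have h2 : y ∈ N.filter (fun e => e.1 = x.1) := by
      simp only [Finset.mem_filter]; exact ⟨hy, hxy.symm⟩
    exact Finset.card_le_one.mp (hNb.2.1 x.1) x h1 y h2
  have hsumM : (∑ a ∈ M.image Prod.fst, w a) = ∑ e ∈ M, w e.1 :=
    Finset.sum_image (fun x hx y hy h => hinjM x hx y hy h)
  have hsumN : (∑ a ∈ N.image Prod.fst, w a) = ∑ e ∈ N, w e.1 :=
    Finset.sum_image (fun x hx y hy h => hinjN x hx y hy h)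
  have hlt : (∑ a ∈ M.image Prod.fst, w a) < ∑ a ∈ N.image Prod.fst, w a :=
    Finset.sum_lt_sum_of_subset hsub haN haM (hw a) (fun j _ _ => (hw j).le)
  rw [hsumM, hsumN] at hlt
  linarith
end

section
/- Let M be a maximum-weight matching of size at most s in a bipartite graph where all edges incident to agent a have weight w(a) > 0, with |M| = s. If ρ is an M-augmenting path from an unmatched agent a_1 to an unsaturated category, then every edge e ∈ M satisfies w(e) ≥ w(a_1); equivalently, w(a_1) is at most the minimum edge weight in M. -/
/-- An `M`-augmenting path: alternating non-matching / matching edges,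
starting at an agent unmatched in `M` and ending at a category with
fewer than `b c` matched edges. -/
structure AugPath {A C : Type*} [DecidableEq A] [DecidableEq C]
    (E M : Finset (A × C)) (b : C → ℕ) where
  k : ℕ
  a : Fin (k + 1) → A
  c : Fin (k + 1) → C
  injA : Function.Injective a
  injC : Function.Injective c
  edgeNew : ∀ i, (a i, c i) ∈ E ∧ (a i, c i) ∉ M
  edgeMatch : ∀ i : Fin k, (a i.succ, c i.castSucc) ∈ M
  startFree : ∀ e ∈ M, e.1 ≠ a 0
  endSlack : (M.filter (fun e => e.2 = c (Fin.last k))).card < b (c (Fin.last k))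

lemma aug_key {A C : Type*} [DecidableEq A] [DecidableEq C]
    (E M : Finset (A × C)) (b : C → ℕ) (w : A → ℝ) (s : ℕ)
    (hM : IsBMatching E M b) (hMs : M.card = s)
    (hmaxW : ∀ M', IsBMatching E M' b → M'.card ≤ s →
      (∑ e ∈ M', w e.1) ≤ ∑ e ∈ M, w e.1)
    (ρ : AugPath E M b) (e : A × C) (he : e ∈ M)
    (hlt : w e.1 < w (ρ.a 0))
    (j : ℕ) (hj : j ≤ ρ.k)
    (hnot : ∀ i : Fin ρ.k, (i : ℕ) < j → e ≠ (ρ.a i.succ, ρ.c i.castSucc))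
    (hslack : e.2 = ρ.c ⟨j, Nat.lt_succ_of_le hj⟩ ∨
      (M.filter (fun f => f.2 = ρ.c ⟨j, Nat.lt_succ_of_le hj⟩)).card
        < b (ρ.c ⟨j, Nat.lt_succ_of_le hj⟩)) :
    False := by
  obtain ⟨k, a, c, injA, injC, edgeNew, edgeMatch, startFree, endSlack⟩ := ρ
  simp only at hnot hslack hlt ⊢
  obtain ⟨hME, hMa, hMc⟩ := hM
  set jf : Fin (k+1) := ⟨j, Nat.lt_succ_of_le hj⟩ with hjf
  set F0 : Finset (Fin k) := Finset.univ.filter (fun i => (i : ℕ) < j) with hF0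
  set F1 : Finset (Fin (k+1)) := Finset.univ.filter (fun i => (i : ℕ) ≤ j) with hF1
  -- injectivity of edge maps
  have injNew : Function.Injective (fun i : Fin (k+1) => (a i, c i)) := by
    intro i i' h
    exact injA (congrArg Prod.fst h)
  have injOld : Function.Injective (fun i : Fin k => (a i.succ, c i.castSucc)) := by
    intro i i' h
    have := injA (congrArg Prod.fst h)
    exact Fin.succ_injective _ this
  set RemI : Finset (A × C) := F0.image (fun i => (a i.succ, c i.castSucc)) with hRemI
  set Rem : Finset (A × C) := insert e RemI with hRem
  set Addl : Finset (A × C) := F1.image (fun i => (a i, c i)) with hAddl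
  set M' : Finset (A × C) := (M \ Rem) ∪ Addl with hM'
  have heRemI : e ∉ RemI := by
    simp only [hRemI, Finset.mem_image, hF0, Finset.mem_filter, Finset.mem_univ, true_and]
    rintro ⟨i, hi, rfl⟩
    exact hnot i hi rfl
  have hRemM : Rem ⊆ M := by
    intro x hx
    rcases Finset.mem_insert.mp hx with rfl | hx
    · exact he
    · obtain ⟨i, _, rfl⟩ := Finset.mem_image.mp hx
      exact edgeMatch i
  -- key index identity
  have hkey : F1 = insert (0 : Fin (k+1)) (F0.image Fin.succ) := by
    ext i
    simp only [hF1, hF0, Finset.mem_filter, Finset.mem_univ, true_and, Finset.mem_insert,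
      Finset.mem_image]
    constructor
    · intro hi
      by_cases h0 : i = 0
      · exact Or.inl h0
      · refine Or.inr ⟨i.pred h0, ?_, Fin.succ_pred i h0⟩
        have h1 : 1 ≤ (i : ℕ) := by
          rcases Nat.eq_zero_or_pos (i : ℕ) with h | h
          · exact absurd (Fin.ext h) h0
          · exact h
        simp [Fin.coe_pred]
        omega
    · rintro (rfl | ⟨i', hi', rfl⟩)
      · simp
      · simp [Fin.val_succ]
        omega
  have h0img : (0 : Fin (k+1)) ∉ F0.image Fin.succ := by
    simp only [Finset.mem_image]
    rintro ⟨i, _, hi⟩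
    exact (Fin.succ_ne_zero i) hi
  -- cards
  have hcard0 : RemI.card = F0.card := Finset.card_image_of_injective _ injOld
  have hcardRem : Rem.card = F0.card + 1 := by
    rw [hRem, Finset.card_insert_of_notMem heRemI, hcard0]
  have hcardAdd : Addl.card = F0.card + 1 := by
    rw [hAddl, Finset.card_image_of_injective _ injNew, hkey,
      Finset.card_insert_of_notMem h0img, Finset.card_image_of_injective _ (Fin.succ_injective _)]
  have hdisj : Disjoint (M \ Rem) Addl := by
    rw [Finset.disjoint_left]
    intro x hx hxA
    obtain ⟨i, _, rfl⟩ := Finset.mem_image.mp hxA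
    exact (edgeNew i).2 (Finset.mem_sdiff.mp hx).1
  have hcardM' : M'.card = s := by
    rw [hM', Finset.card_union_of_disjoint hdisj, Finset.card_sdiff_of_subset hRemM, hcardRem, hcardAdd]
    have : Rem.card ≤ M.card := Finset.card_le_card hRemM
    omega
  -- sums
  have hsumRemI : ∑ x ∈ RemI, w x.1 = ∑ i ∈ F0, w (a i.succ) := by
    rw [hRemI, Finset.sum_image (fun i _ i' _ h => injOld h)]
  have hsumAdd : ∑ x ∈ Addl, w x.1 = w (a 0) + ∑ i ∈ F0, w (a i.succ) := by
    rw [hAddl, Finset.sum_image (fun i _ i' _ h => injNew h), hkey,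
      Finset.sum_insert h0img, Finset.sum_image
        (fun i _ i' _ h => Fin.succ_injective _ h)]
  have hsumM' : ∑ x ∈ M', w x.1 = ∑ x ∈ M, w x.1 + (w (a 0) - w e.1) := by
    rw [hM', Finset.sum_union hdisj, Finset.sum_sdiff_eq_sub hRemM, hRem,
      Finset.sum_insert heRemI, hsumRemI, hsumAdd]
    ring
  -- subset of E
  have hsub : M' ⊆ E := by
    intro x hx
    rcases Finset.mem_union.mp hx with hx | hx
    · exact hME (Finset.mem_sdiff.mp hx).1
    · obtain ⟨i, _, rfl⟩ := Finset.mem_image.mp hx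
      exact (edgeNew i).1
  -- agent constraint
  have hAg : ∀ a', (M'.filter (fun f => f.1 = a')).card ≤ 1 := by
    intro a'
    rw [hM', Finset.filter_union,
      Finset.card_union_of_disjoint (Finset.disjoint_filter_filter hdisj)]
    by_cases hT : (Addl.filter (fun f => f.1 = a')) = ∅
    · rw [hT, Finset.card_empty, Nat.add_zero]
      exact le_trans (Finset.card_le_card
        (Finset.filter_subset_filter _ Finset.sdiff_subset)) (hMa a')
    · obtain ⟨x, hx⟩ := Finset.nonempty_iff_ne_empty.mpr hT
      obtain ⟨hxA, hxa⟩ := Finset.mem_filter.mp hx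
      obtain ⟨i, hiF, rfl⟩ := Finset.mem_image.mp hxA
      have hT1 : (Addl.filter (fun f => f.1 = a')).card ≤ 1 := by
        refine Finset.card_le_one.mpr ?_
        intro y hy z hz
        obtain ⟨hyA, hya⟩ := Finset.mem_filter.mp hy
        obtain ⟨i1, _, rfl⟩ := Finset.mem_image.mp hyA
        obtain ⟨hzA, hza⟩ := Finset.mem_filter.mp hz
        obtain ⟨i2, _, rfl⟩ := Finset.mem_image.mp hzA
        simp only at hya hza
        have : i1 = i2 := injA (hya.trans hza.symm)
        rw [this]
      have hS0 : ((M \ Rem).filter (fun f => f.1 = a')) = ∅ := by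
        by_contra hS
        obtain ⟨y, hy⟩ := Finset.nonempty_iff_ne_empty.mpr hS
        obtain ⟨hyM, hya⟩ := Finset.mem_filter.mp hy
        obtain ⟨hyM', hyR⟩ := Finset.mem_sdiff.mp hyM
        simp only at hxa
        by_cases h0 : i = 0
        · exact startFree y hyM' (by rw [hya, ← hxa, h0])
        · set i' : Fin k := i.pred h0 with hi'
          have hsp : i'.succ = i := Fin.succ_pred i h0
          have hmM : (a i, c i'.castSucc) ∈ M := by
            have := edgeMatch i'
            rwa [hsp] at this
          have hyeq : y = (a i, c i'.castSucc) := by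
            have h1 := Finset.card_le_one.mp (hMa (a i))
            refine h1 y ?_ _ ?_
            · exact Finset.mem_filter.mpr ⟨hyM', by rw [hya, ← hxa]⟩
            · exact Finset.mem_filter.mpr ⟨hmM, rfl⟩
          have hiF1 : (i : ℕ) ≤ j := by
            have := Finset.mem_filter.mp hiF
            exact this.2
          have h1le : 1 ≤ (i : ℕ) := by
            rcases Nat.eq_zero_or_pos (i : ℕ) with h | h
            · exact absurd (Fin.ext h) h0
            · exact h
          have hi'F0 : i' ∈ F0 := by
            simp only [hF0, Finset.mem_filter, Finset.mem_univ, true_and, hi', Fin.coe_pred]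
            omega
          have : (a i, c i'.castSucc) ∈ RemI := by
            rw [hRemI]
            refine Finset.mem_image.mpr ⟨i', hi'F0, ?_⟩
            rw [hsp]
          exact hyR (Finset.mem_insert.mpr (Or.inr (hyeq ▸ this)))
      rw [hS0, Finset.card_empty, Nat.zero_add]
      exact hT1
  -- category constraint
  have hCat : ∀ c', (M'.filter (fun f => f.2 = c')).card ≤ b c' := by
    intro c'
    rw [hM', Finset.filter_union,
      Finset.card_union_of_disjoint (Finset.disjoint_filter_filter hdisj)]
    by_cases hT : (Addl.filter (fun f => f.2 = c')) = ∅
    · rw [hT, Finset.card_empty, Nat.add_zero]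
      exact le_trans (Finset.card_le_card
        (Finset.filter_subset_filter _ Finset.sdiff_subset)) (hMc c')
    · obtain ⟨x, hx⟩ := Finset.nonempty_iff_ne_empty.mpr hT
      obtain ⟨hxA, hxc⟩ := Finset.mem_filter.mp hx
      obtain ⟨i, hiF, rfl⟩ := Finset.mem_image.mp hxA
      simp only at hxc
      have hT1 : (Addl.filter (fun f => f.2 = c')).card ≤ 1 := by
        refine Finset.card_le_one.mpr ?_
        intro y hy z hz
        obtain ⟨hyA, hyc⟩ := Finset.mem_filter.mp hy
        obtain ⟨i1, _, rfl⟩ := Finset.mem_image.mp hyA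
        obtain ⟨hzA, hzc⟩ := Finset.mem_filter.mp hz
        obtain ⟨i2, _, rfl⟩ := Finset.mem_image.mp hzA
        simp only at hyc hzc
        have : i1 = i2 := injC (hyc.trans hzc.symm)
        rw [this]
      have hiF1 : (i : ℕ) ≤ j := (Finset.mem_filter.mp hiF).2
      have hSsub : ((M \ Rem).filter (fun f => f.2 = c'))
          ⊆ M.filter (fun f => f.2 = c') :=
        Finset.filter_subset_filter _ Finset.sdiff_subset
      -- with a removed edge of category c', we can afford the new edge
      have key : ∀ m, m ∈ Rem → m.2 = c' → m ∈ M →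
          ((M \ Rem).filter (fun f => f.2 = c')).card
            + (Addl.filter (fun f => f.2 = c')).card ≤ b c' := by
        intro m hmR hmc hmM
        have hmF : m ∈ M.filter (fun f => f.2 = c') := Finset.mem_filter.mpr ⟨hmM, hmc⟩
        have hsub2 : ((M \ Rem).filter (fun f => f.2 = c'))
            ⊆ (M.filter (fun f => f.2 = c')).erase m := by
          intro y hy
          refine Finset.mem_erase.mpr ⟨?_, hSsub hy⟩
          rintro rfl
          exact (Finset.mem_sdiff.mp (Finset.mem_filter.mp hy).1).2 hmR
        have h1 := Finset.card_le_card hsub2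
        rw [Finset.card_erase_of_mem hmF] at h1
        have h2 := hMc c'
        have h3 : 1 ≤ (M.filter (fun f => f.2 = c')).card :=
          Finset.card_pos.mpr ⟨m, hmF⟩
        omega
      rcases Nat.lt_or_ge (i : ℕ) j with hij | hij
      · -- the matched edge at category c i is removed
        set i' : Fin k := ⟨(i : ℕ), lt_of_lt_of_le hij hj⟩ with hi'
        have hcs : i'.castSucc = i := by
          apply Fin.ext
          simp [hi']
        have hmM : (a i'.succ, c i) ∈ M := by
          have := edgeMatch i'
          rwa [hcs] at this
        have hi'F0 : i' ∈ F0 := by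
          simp only [hF0, Finset.mem_filter, Finset.mem_univ, true_and, hi']
          exact hij
        have hmR : (a i'.succ, c i) ∈ Rem := by
          refine Finset.mem_insert.mpr (Or.inr ?_)
          rw [hRemI]
          exact Finset.mem_image.mpr ⟨i', hi'F0, by rw [hcs]⟩
        exact key _ hmR hxc hmM
      · -- i = jf : use the slack hypothesis
        have hieq : i = jf := by
          apply Fin.ext
          have : (i : ℕ) = j := le_antisymm hiF1 hij
          simpa [hjf] using this
        rcases hslack with he2 | hsl
        · exact key e (Finset.mem_insert_self e RemI) (by rw [he2, ← hieq, hxc]) he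
        · have hS1 : ((M \ Rem).filter (fun f => f.2 = c')).card
              ≤ (M.filter (fun f => f.2 = c')).card := Finset.card_le_card hSsub
          have : (M.filter (fun f => f.2 = c')).card < b c' := by
            rw [← hxc, hieq]
            exact hsl
          omega
  have hM'b : IsBMatching E M' b := ⟨hsub, hAg, hCat⟩
  have hle := hmaxW M' hM'b (le_of_eq hcardM')
  rw [hsumM'] at hle
  linarith

/-- Let `M` be a maximum-weight b-matching of size at most `s`, with
`|M| = s` and all edges at agent `a` of weight `w a > 0`.  If `ρ` is an
`M`-augmenting path starting at the unmatched agent `ρ.a 0`, then every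
edge of `M` has weight at least `w (ρ.a 0)`. -/
theorem augpath_start_min_weight {A C : Type*} [DecidableEq A] [DecidableEq C]
    (E M : Finset (A × C)) (b : C → ℕ) (w : A → ℝ) (s : ℕ)
    (hw : ∀ a, 0 < w a)
    (hM : IsBMatching E M b) (hMs : M.card = s)
    (hmaxW : ∀ M', IsBMatching E M' b → M'.card ≤ s →
      (∑ e ∈ M', w e.1) ≤ ∑ e ∈ M, w e.1)
    (ρ : AugPath E M b) :
    ∀ e ∈ M, w (ρ.a 0) ≤ w e.1 := by
  intro e he
  by_contra hlt
  push_neg at hlt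
  by_cases hex : ∃ i : Fin ρ.k, e = (ρ.a i.succ, ρ.c i.castSucc)
  · obtain ⟨i, hei⟩ := hex
    refine aug_key E M b w s hM hMs hmaxW ρ e he hlt (i : ℕ) (le_of_lt i.isLt) ?_ ?_
    · intro i' hi' h
      have heq : (ρ.a i.succ, ρ.c i.castSucc) = (ρ.a i'.succ, ρ.c i'.castSucc) := by
        rw [← hei, h]
      have h1 := ρ.injA (congrArg Prod.fst heq)
      have h2 : i = i' := Fin.succ_injective _ h1
      rw [h2] at hi'
      exact absurd hi' (lt_irrefl _)
    · left
      have hcs : (⟨(i : ℕ), Nat.lt_succ_of_le (le_of_lt i.isLt)⟩ : Fin (ρ.k+1))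
          = i.castSucc := Fin.ext rfl
      rw [hcs, hei]
  · push_neg at hex
    refine aug_key E M b w s hM hMs hmaxW ρ e he hlt ρ.k le_rfl ?_ ?_
    · intro i _
      exact hex i
    · right
      have hl : (⟨ρ.k, Nat.lt_succ_of_le le_rfl⟩ : Fin (ρ.k+1)) = Fin.last ρ.k := rfl
      rw [hl]
      exact ρ.endSlack
end

section
/- Every integral flow of value at most the capacities in the layered day–category–agent network corresponds to a feasible vaccine allocation, and the negated cost of the flow equals the total utility of the allocation; consequently, a minimum-cost integral flow yields a maximum-utility allocation. -/
/-- An integral flow in the layered day–category–agent network of the vaccine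
allocation reduction: source `s` → day nodes `d j` (capacity `supply j`) →
category-day nodes `c_{ij}` (capacity `quota c j`) → agent nodes `a`
(capacity-1 edges, present iff `elig a c j`, of cost `-α a · δ^j`) → sink `t`
(capacity-1 edges). -/
structure IntFlow {A C : Type*} [Fintype A] [Fintype C] (nD : ℕ)
    (supply : Fin nD → ℕ) (quota : C → Fin nD → ℕ)
    (elig : A → C → Fin nD → Prop) where
  fsd : Fin nD → ℕ
  fdc : C → Fin nD → ℕ
  fca : C → Fin nD → A → ℕ
  fat : A → ℕ
  cap_sd : ∀ j, fsd j ≤ supply j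
  cap_dc : ∀ c j, fdc c j ≤ quota c j
  cap_ca : ∀ c j a, fca c j a ≤ 1
  supp_ca : ∀ c j a, fca c j a ≠ 0 → elig a c j
  cap_at : ∀ a, fat a ≤ 1
  cons_d : ∀ j, fsd j = ∑ c, fdc c j
  cons_c : ∀ c j, fdc c j = ∑ a, fca c j a
  cons_a : ∀ a, (∑ c, ∑ j, fca c j a) = fat a

/-- The cost of a flow: each unit on edge `(c_{ij}, a)` costs `-α a · δ^j`. -/
def flowCost {A C : Type*} [Fintype A] [Fintype C] {nD : ℕ}
    {supply : Fin nD → ℕ} {quota : C → Fin nD → ℕ}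
    {elig : A → C → Fin nD → Prop} (α : A → ℝ) (δ : ℝ)
    (f : IntFlow nD supply quota elig) : ℝ :=
  ∑ c, ∑ j : Fin nD, ∑ a, (-(α a * δ ^ (j : ℕ))) * (f.fca c j a : ℝ)

/-- A feasible allocation: each agent gets at most one (category, day) pair,
respecting eligibility/availability, daily supplies and daily quotas. -/
def FeasibleAlloc {A C : Type*} [Fintype A] [Fintype C]
    [DecidableEq A] [DecidableEq C] {nD : ℕ}
    (supply : Fin nD → ℕ) (quota : C → Fin nD → ℕ)
    (elig : A → C → Fin nD → Prop)
    (M : A → Option (C × Fin nD)) : Prop :=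
  (∀ a c j, M a = some (c, j) → elig a c j) ∧
    (∀ j, (Finset.univ.filter (fun a : A => ∃ c, M a = some (c, j))).card ≤ supply j) ∧
    (∀ c j, (Finset.univ.filter (fun a : A => M a = some (c, j))).card ≤ quota c j)

/-- The total utility of an allocation: an agent matched on day `j` with
priority `α a` contributes `α a · δ^j`. -/
def allocUtility {A C : Type*} [Fintype A] [Fintype C] {nD : ℕ}
    (α : A → ℝ) (δ : ℝ) (M : A → Option (C × Fin nD)) : ℝ :=
  ∑ a, ((M a).elim 0 fun p => α a * δ ^ (p.2 : ℕ))


set_option linter.unusedSectionVars false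
section AuxProof
open Finset
variable {A C : Type*} [Fintype A] [Fintype C]
    [DecidableEq A] [DecidableEq C] {nD : ℕ}
    {supply : Fin nD → ℕ} {quota : C → Fin nD → ℕ}
    {elig : A → C → Fin nD → Prop} [∀ a c j, Decidable (elig a c j)]

-- toFlow
def toFlow (M : A → Option (C × Fin nD)) (hM : FeasibleAlloc supply quota elig M) :
    IntFlow nD supply quota elig where
  fsd j := (Finset.univ.filter (fun a : A => ∃ c, M a = some (c, j))).card
  fdc c j := (Finset.univ.filter (fun a : A => M a = some (c, j))).card
  fca c j a := if M a = some (c, j) then 1 else 0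
  fat a := if (M a).isSome then 1 else 0
  cap_sd j := hM.2.1 j
  cap_dc c j := hM.2.2 c j
  cap_ca c j a := by beta_reduce; split <;> simp
  supp_ca c j a h := by
    beta_reduce at h
    by_cases hc : M a = some (c, j)
    · exact hM.1 a c j hc
    · simp [hc] at h
  cap_at a := by beta_reduce; split <;> simp
  cons_d j := by
    beta_reduce
    simp only [Finset.card_filter]
    rw [Finset.sum_comm]
    refine Finset.sum_congr rfl fun a _ => ?_
    cases hMa : M a with
    | none => simp [hMa]
    | some p =>
      obtain ⟨c₀, j₀⟩ := p
      by_cases hj : j₀ = j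
      · subst hj
        simp [hMa, Finset.sum_ite_eq, eq_comm]
      · simp [hMa, hj]
  cons_c c j := by beta_reduce; rw [Finset.card_filter]
  cons_a a := by
    beta_reduce
    cases hMa : M a with
    | none => simp [hMa]
    | some p =>
      obtain ⟨c₀, j₀⟩ := p
      rw [Finset.sum_eq_single c₀]
      · rw [Finset.sum_eq_single j₀] <;> simp +contextual [hMa, eq_comm]
      · intro c _ hc
        refine Finset.sum_eq_zero fun j _ => ?_
        simp [hMa, Ne.symm hc]
      · simp


lemma sum_pairs_le (f : IntFlow nD supply quota elig) (a : A) :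
    ∑ p : C × Fin nD, f.fca p.1 p.2 a ≤ 1 := by
  rw [Fintype.sum_prod_type, f.cons_a a]
  exact f.cap_at a

lemma fca_uniq (f : IntFlow nD supply quota elig) {a : A} {p q : C × Fin nD}
    (hp : f.fca p.1 p.2 a = 1) (hq : f.fca q.1 q.2 a = 1) : p = q := by
  by_contra hpq
  have h2 : 2 ≤ ∑ r : C × Fin nD, f.fca r.1 r.2 a := by
    calc 2 = ∑ r ∈ ({p, q} : Finset (C × Fin nD)), f.fca r.1 r.2 a := by
            rw [Finset.sum_pair hpq, hp, hq]
      _ ≤ _ := Finset.sum_le_sum_of_subset (Finset.subset_univ _)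
  have := sum_pairs_le f a
  omega

lemma fca_eq_one_of_ne_zero (f : IntFlow nD supply quota elig) {c j a}
    (h : f.fca c j a ≠ 0) : f.fca c j a = 1 := by
  have := f.cap_ca c j a; omega

noncomputable def toAlloc (f : IntFlow nD supply quota elig) :
    A → Option (C × Fin nD) := fun a =>
  if h : ∃ p : C × Fin nD, f.fca p.1 p.2 a = 1 then some h.choose else none

lemma toAlloc_eq_some_iff (f : IntFlow nD supply quota elig) {a : A} {c : C} {j : Fin nD} :
    toAlloc f a = some (c, j) ↔ f.fca c j a = 1 := by
  unfold toAlloc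
  constructor
  · intro h
    split at h
    · rename_i hex
      have he : hex.choose = (c, j) := Option.some.inj h
      have := hex.choose_spec
      rw [he] at this
      exact this
    · simp at h
  · intro h
    have hex : ∃ p : C × Fin nD, f.fca p.1 p.2 a = 1 := ⟨(c, j), h⟩
    rw [dif_pos hex]
    have := fca_uniq (q := (c, j)) f hex.choose_spec h
    rw [this]

lemma toAlloc_feasible (f : IntFlow nD supply quota elig) :
    FeasibleAlloc supply quota elig (toAlloc f) := by
  refine ⟨fun a c j h => ?_, fun j => ?_, fun c j => ?_⟩
  · exact f.supp_ca c j a (by rw [(toAlloc_eq_some_iff f).mp h]; exact one_ne_zero)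
  · calc (Finset.univ.filter fun a : A => ∃ c, toAlloc f a = some (c, j)).card
        ≤ ∑ a : A, ∑ c : C, f.fca c j a := by
          rw [Finset.card_filter]
          refine Finset.sum_le_sum fun a _ => ?_
          split
          · rename_i hex
            obtain ⟨c, hc⟩ := hex
            have h1 : f.fca c j a = 1 := (toAlloc_eq_some_iff f).mp hc
            calc 1 = f.fca c j a := h1.symm
              _ ≤ _ := Finset.single_le_sum (f := fun c => f.fca c j a)
                  (fun _ _ => Nat.zero_le _) (Finset.mem_univ c)
          · exact Nat.zero_le _
      _ = f.fsd j := by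
          rw [f.cons_d, Finset.sum_comm]
          exact Finset.sum_congr rfl fun c _ => (f.cons_c c j).symm
      _ ≤ supply j := f.cap_sd j
  · calc (Finset.univ.filter fun a : A => toAlloc f a = some (c, j)).card
        ≤ ∑ a : A, f.fca c j a := by
          rw [Finset.card_filter]
          refine Finset.sum_le_sum fun a _ => ?_
          split
          · rename_i hc
            exact ((toAlloc_eq_some_iff f).mp hc).ge
          · exact Nat.zero_le _
      _ = f.fdc c j := (f.cons_c c j).symm
      _ ≤ quota c j := f.cap_dc c j

lemma sum_swap3 (g : C → Fin nD → A → ℝ) :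
    ∑ c, ∑ j, ∑ a, g c j a = ∑ a, ∑ c, ∑ j, g c j a :=
  calc ∑ c, ∑ j, ∑ a, g c j a = ∑ c, ∑ a, ∑ j, g c j a :=
        Finset.sum_congr rfl fun _ _ => Finset.sum_comm
    _ = ∑ a, ∑ c, ∑ j, g c j a := Finset.sum_comm

lemma negCost (α : A → ℝ) (δ : ℝ) (f : IntFlow nD supply quota elig) :
    -flowCost α δ f
      = ∑ a, ∑ p : C × Fin nD, α a * δ ^ ((p.2 : ℕ)) * (f.fca p.1 p.2 a : ℝ) := by
  unfold flowCost
  simp only [neg_mul, Finset.sum_neg_distrib, neg_neg, Fintype.sum_prod_type]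
  exact sum_swap3 _

lemma util_toAlloc (α : A → ℝ) (δ : ℝ) (f : IntFlow nD supply quota elig) :
    allocUtility α δ (toAlloc f) = -flowCost α δ f := by
  rw [negCost]
  refine Finset.sum_congr rfl fun a _ => ?_
  by_cases hex : ∃ p : C × Fin nD, f.fca p.1 p.2 a = 1
  · obtain ⟨p₀, hp₀⟩ := hex
    have hM : toAlloc f a = some p₀ := (toAlloc_eq_some_iff (c := p₀.1) (j := p₀.2) f).mpr hp₀
    rw [hM, Finset.sum_eq_single p₀]
    · simp [hp₀]
    · intro q _ hq
      have h0 : f.fca q.1 q.2 a = 0 := by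
        by_contra h
        exact hq (fca_uniq f (fca_eq_one_of_ne_zero f h) hp₀)
      simp [h0]
    · simp
  · have hM : toAlloc f a = none := dif_neg hex
    rw [hM]
    symm
    push_neg at hex
    refine Finset.sum_eq_zero fun q _ => ?_
    have h0 : f.fca q.1 q.2 a = 0 := by
      by_contra h
      exact hex q (fca_eq_one_of_ne_zero f h)
    simp [h0]

lemma cost_toFlow (α : A → ℝ) (δ : ℝ) (M : A → Option (C × Fin nD))
    (hM : FeasibleAlloc supply quota elig M) :
    flowCost α δ (toFlow M hM) = -allocUtility α δ M := by
  have h2 : allocUtility α δ M = -flowCost α δ (toFlow M hM) := by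
    rw [negCost]
    refine Finset.sum_congr rfl fun a _ => ?_
    cases hMa : M a with
    | none =>
      symm
      refine Finset.sum_eq_zero fun q _ => ?_
      simp [toFlow, hMa]
    | some p₀ =>
      rw [Finset.sum_eq_single p₀]
      · simp [toFlow, hMa]
      · intro q _ hq
        have hne : M a ≠ some (q.1, q.2) := by
          rw [hMa]
          intro h
          exact hq (Prod.mk.eta.symm.trans (Option.some.inj h).symm)
        simp only [toFlow]
        rw [if_neg hne]
        simp
      · simp
  rw [← neg_neg (flowCost α δ (toFlow M hM)), ← h2]

end AuxProof

/-- Feasible allocations correspond to integral flows: there are maps between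
feasible allocations and integral flows in the layered network under which
the negated flow cost equals the allocation utility; consequently a
minimum-cost integral flow yields a maximum-utility allocation. -/
theorem minCostFlow_gives_maxUtility {A C : Type*} [Fintype A] [Fintype C]
    [DecidableEq A] [DecidableEq C] (nD : ℕ)
    (supply : Fin nD → ℕ) (quota : C → Fin nD → ℕ)
    (elig : A → C → Fin nD → Prop) [∀ a c j, Decidable (elig a c j)]
    (α : A → ℝ) (δ : ℝ) (hα : ∀ a, 0 < α a) (hδ0 : 0 < δ) (hδ1 : δ < 1) :
    ∃ Φ : {M : A → Option (C × Fin nD) // FeasibleAlloc supply quota elig M} →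
        IntFlow nD supply quota elig,
      ∃ Ψ : IntFlow nD supply quota elig →
          {M : A → Option (C × Fin nD) // FeasibleAlloc supply quota elig M},
        (∀ M : {M : A → Option (C × Fin nD) // FeasibleAlloc supply quota elig M},
          flowCost α δ (Φ M) = -allocUtility α δ M.val) ∧
        (∀ f : IntFlow nD supply quota elig, allocUtility α δ (Ψ f).val = -flowCost α δ f) ∧
        (∀ f : IntFlow nD supply quota elig, (∀ f' : IntFlow nD supply quota elig, flowCost α δ f ≤ flowCost α δ f') →
          ∀ M' : A → Option (C × Fin nD), FeasibleAlloc supply quota elig M' →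
            allocUtility α δ M' ≤ allocUtility α δ (Ψ f).val) := by
  classical
  refine ⟨fun M => toFlow M.val M.prop,
    fun f => ⟨toAlloc f, toAlloc_feasible f⟩, ?_, ?_, ?_⟩
  · exact fun M => cost_toFlow α δ M.val M.prop
  · exact fun f => util_toAlloc α δ f
  · intro f hmin M' hM'
    have h1 : allocUtility α δ M' = -flowCost α δ (toFlow M' hM') := by
      rw [cost_toFlow α δ M' hM', neg_neg]
    rw [h1, util_toAlloc]
    exact neg_le_neg (hmin (toFlow M' hM'))
end

section
/- In the greedy online algorithm, the set X_i of Type-2 agents matched by the optimal offline solution on day d_i satisfies |X_i| ≤ |Y_i|, where Y_i is the set of agents matched by the online algorithm on day d_i, under Model 1 (daily quotas only). -/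
/-- Model 1, day `d_i`: the online matching `M` is a maximum-size b-matching
of size at most the daily supply `s` in the graph `H_i` (edge set `E` on the
pool of available, not-yet-matched agents, with daily quotas `b` as category
capacities); the optimal solution restricted to day `d_i` and to Type-2
agents gives a feasible b-matching `N` of size at most `s` in the same graph.
Then the set `X` of agents matched in `N` is no larger than the set `Y` of
agents matched in `M`. -/
theorem type2_le_online {A C : Type*} [DecidableEq A] [DecidableEq C]
    (E M N : Finset (A × C)) (b : C → ℕ) (s : ℕ)
    (hM : IsBMatching E M b) (hMs : M.card ≤ s)
    (hN : IsBMatching E N b) (hNs : N.card ≤ s)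
    (hmax : ∀ M', IsBMatching E M' b → M'.card ≤ s → M'.card ≤ M.card) :
    (N.image Prod.fst).card ≤ (M.image Prod.fst).card := by
  have key : ∀ P : Finset (A × C), (∀ a : A, (P.filter (fun e => e.1 = a)).card ≤ 1) →
      (P.image Prod.fst).card = P.card := by
    intro P hP
    apply Finset.card_image_of_injOn
    intro e he e' he' hee
    simp only [Finset.mem_coe] at he he'
    by_contra hne
    have h2 : 2 ≤ (P.filter (fun e'' => e''.1 = e.1)).card := by
      have : ({e, e'} : Finset (A × C)) ⊆ P.filter (fun e'' => e''.1 = e.1) := by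
        intro x hx
        simp only [Finset.mem_insert, Finset.mem_singleton] at hx
        rcases hx with rfl | rfl <;> simp [Finset.mem_filter, he, he', hee.symm]
      calc 2 = ({e, e'} : Finset (A × C)).card := (Finset.card_pair hne).symm
        _ ≤ _ := Finset.card_le_card this
    have := hP e.1
    omega
  rw [key N hN.2.1, key M hM.2.1]
  exact hmax N hN hNs
end

section
/- Let M_i be a maximum-weight (hence maximum-size) b-matching of size at most s_i in a bipartite graph H_i with agent-determined edge weights, and let N_i be any b-matching in H_i with vertex set X_i of matched agents, |X_i| ≤ |Y_i| where Y_i is the agent set matched by M_i. Then there exists an injection f : X_i → Y_i such that for every a_p ∈ X_i, the priority factor satisfies α_p ≤ α_{f(a_p)}. -/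
namespace PriorityInj

open Finset

variable {A C : Type*} [DecidableEq A] [DecidableEq C]

/-- Neighbours of an agent (with positive capacity). -/
def nbr (E : Finset (A × C)) (b : C → ℕ) (a : A) : Finset C :=
  ((E.filter (fun e => e.1 = a)).image Prod.snd).filter (fun c => 0 < b c)

/-- Total capacity of the neighbourhood of a set of agents. -/
def cap (E : Finset (A × C)) (b : C → ℕ) (T : Finset A) : ℕ :=
  ∑ c ∈ T.biUnion (nbr E b), b c

/-- A set of agents is independent if some b-matching matches exactly it. -/
def Ind (E : Finset (A × C)) (b : C → ℕ) (I : Finset A) : Prop :=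
  ∃ M, IsBMatching E M b ∧ M.image Prod.fst = I

lemma injOn_fst {E M : Finset (A × C)} {b : C → ℕ} (hM : IsBMatching E M b) :
    Set.InjOn Prod.fst (M : Set (A × C)) := by
  intro e1 h1 e2 h2 h
  have hc := hM.2.1 e1.1
  have h1' : e1 ∈ M.filter (fun e => e.1 = e1.1) := mem_filter.2 ⟨h1, rfl⟩
  have h2' : e2 ∈ M.filter (fun e => e.1 = e1.1) := mem_filter.2 ⟨h2, h.symm⟩
  exact (Finset.card_le_one.1 hc _ h1' _ h2').symm ▸ rfl

lemma card_agents {E M : Finset (A × C)} {b : C → ℕ} (hM : IsBMatching E M b) :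
    (M.image Prod.fst).card = M.card :=
  Finset.card_image_of_injOn (injOn_fst hM)

lemma sum_agents {E M : Finset (A × C)} {b : C → ℕ} (hM : IsBMatching E M b) (g : A → ℝ) :
    ∑ a ∈ M.image Prod.fst, g a = ∑ e ∈ M, g e.1 :=
  Finset.sum_image (fun x hx y hy h => injOn_fst hM (by exact_mod_cast hx) (by exact_mod_cast hy) h)

lemma Ind.subset {E : Finset (A × C)} {b : C → ℕ} {I I' : Finset A}
    (hI : Ind E b I) (hsub : I' ⊆ I) : Ind E b I' := by
  obtain ⟨M, hM, hima⟩ := hI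
  refine ⟨M.filter (fun e => e.1 ∈ I'), ⟨(filter_subset _ _).trans hM.1, ?_, ?_⟩, ?_⟩
  · intro a
    refine le_trans (card_le_card ?_) (hM.2.1 a)
    intro e he
    simp only [mem_filter] at he ⊢
    exact ⟨he.1.1, he.2⟩
  · intro c
    refine le_trans (card_le_card ?_) (hM.2.2 c)
    intro e he
    simp only [mem_filter] at he ⊢
    exact ⟨he.1.1, he.2⟩
  · ext a
    simp only [mem_image, mem_filter]
    constructor
    · rintro ⟨e, ⟨_, he⟩, rfl⟩
      exact he
    · intro ha
      have : a ∈ M.image Prod.fst := hima ▸ hsub ha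
      obtain ⟨e, he, rfl⟩ := mem_image.1 this
      exact ⟨e, ⟨he, ha⟩, rfl⟩

/-- Easy direction of capacitated Hall: matched sets satisfy the capacity condition. -/
lemma card_le_cap {E : Finset (A × C)} {b : C → ℕ} {I : Finset A}
    (hI : Ind E b I) {T : Finset A} (hT : T ⊆ I) : T.card ≤ cap E b T := by
  obtain ⟨M, hM, rfl⟩ := hI
  set F := M.filter (fun e => e.1 ∈ T) with hF
  have hFM : F ⊆ M := filter_subset _ _
  have hFT : F.image Prod.fst = T := by
    ext a
    simp only [hF, mem_image, mem_filter]
    constructor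
    · rintro ⟨e, ⟨_, he⟩, rfl⟩; exact he
    · intro ha
      obtain ⟨e, he, rfl⟩ := mem_image.1 (hT ha)
      exact ⟨e, ⟨he, ha⟩, rfl⟩
  have hTcard : T.card = F.card := by
    rw [← hFT]
    exact Finset.card_image_of_injOn ((injOn_fst hM).mono (by exact_mod_cast hFM))
  have hfib : F.card = ∑ c ∈ F.image Prod.snd, (F.filter (fun e => e.2 = c)).card :=
    Finset.card_eq_sum_card_fiberwise (fun e he => mem_image_of_mem _ he)
  have hbound : ∀ c ∈ F.image Prod.snd, (F.filter (fun e => e.2 = c)).card ≤ b c := by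
    intro c _
    refine le_trans (card_le_card ?_) (hM.2.2 c)
    intro e he
    simp only [hF, mem_filter] at he ⊢
    exact ⟨he.1.1, he.2⟩
  have hsub2 : F.image Prod.snd ⊆ T.biUnion (nbr E b) := by
    intro c hc
    obtain ⟨e, he, rfl⟩ := mem_image.1 hc
    have heM : e ∈ M := hFM he
    have heT : e.1 ∈ T := (mem_filter.1 he).2
    refine mem_biUnion.2 ⟨e.1, heT, ?_⟩
    have hpos : 0 < b e.2 := by
      refine lt_of_lt_of_le ?_ (hM.2.2 e.2)
      exact Finset.card_pos.2 ⟨e, mem_filter.2 ⟨heM, rfl⟩⟩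
    exact mem_filter.2 ⟨mem_image.2 ⟨e, mem_filter.2 ⟨hM.1 heM, rfl⟩, rfl⟩, hpos⟩
  calc T.card = F.card := hTcard
    _ = ∑ c ∈ F.image Prod.snd, (F.filter (fun e => e.2 = c)).card := hfib
    _ ≤ ∑ c ∈ F.image Prod.snd, b c := Finset.sum_le_sum hbound
    _ ≤ ∑ c ∈ T.biUnion (nbr E b), b c := Finset.sum_le_sum_of_subset hsub2

/-- Slot sets: capacity-many slots per category. -/
def slots (b : C → ℕ) (c : C) : Finset (C × ℕ) := (Finset.range (b c)).image (fun j => (c, j))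

lemma card_biUnion_slots (b : C → ℕ) (D : Finset C) :
    (D.biUnion (slots b)).card = ∑ c ∈ D, b c := by
  rw [Finset.card_biUnion]
  · refine Finset.sum_congr rfl fun c _ => ?_
    rw [slots, Finset.card_image_of_injective _ (fun j k h => congrArg Prod.snd h),
      Finset.card_range]
  · intro c hc c' hc' hne
    refine Finset.disjoint_left.2 ?_
    intro p hp hp'
    have h1 : p.1 = c := by
      obtain ⟨j, _, rfl⟩ := mem_image.1 hp; rfl
    have h2 : p.1 = c' := by
      obtain ⟨j, _, rfl⟩ := mem_image.1 hp'; rfl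
    exact hne (h1 ▸ h2)

/-- Hard direction of capacitated Hall: the capacity condition implies matchability. -/
lemma ind_of_hall {E : Finset (A × C)} {b : C → ℕ} {I : Finset A}
    (h : ∀ T ⊆ I, T.card ≤ cap E b T) : Ind E b I := by
  classical
  set t : {a // a ∈ I} → Finset (C × ℕ) := fun a => (nbr E b a.1).biUnion (slots b) with ht
  have hall : ∀ s : Finset {a // a ∈ I}, s.card ≤ (s.biUnion t).card := by
    intro s
    have h1 : s.biUnion t = ((s.image Subtype.val).biUnion (nbr E b)).biUnion (slots b) := by
      rw [Finset.biUnion_biUnion, Finset.image_biUnion]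
    have h2 : (s.biUnion t).card = cap E b (s.image Subtype.val) := by
      rw [h1, card_biUnion_slots]; rfl
    have h3 : s.image Subtype.val ⊆ I := by
      intro a ha
      obtain ⟨p, _, rfl⟩ := mem_image.1 ha
      exact p.2
    calc s.card = (s.image Subtype.val).card :=
          (Finset.card_image_of_injective _ Subtype.val_injective).symm
      _ ≤ cap E b (s.image Subtype.val) := h _ h3
      _ = (s.biUnion t).card := h2.symm
  obtain ⟨f, finj, hf⟩ := (Finset.all_card_le_biUnion_card_iff_exists_injective t).1 hall
  have hfprop : ∀ a : {a // a ∈ I}, (f a).1 ∈ nbr E b a.1 ∧ (f a).2 < b (f a).1 := by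
    intro a
    obtain ⟨c, hc, hmem⟩ := mem_biUnion.1 (hf a)
    obtain ⟨j, hj, hcj⟩ := mem_image.1 hmem
    constructor
    · rw [← hcj]; exact hc
    · rw [← hcj]; simpa using mem_range.1 hj
  have hE : ∀ a : {a // a ∈ I}, (a.1, (f a).1) ∈ E := by
    intro a
    have hmem := (mem_filter.1 (hfprop a).1).1
    obtain ⟨e, he, hsnd⟩ := mem_image.1 hmem
    have he' := mem_filter.1 he
    have heq : e = (a.1, (f a).1) := Prod.ext he'.2 hsnd
    exact heq ▸ he'.1
  refine ⟨I.attach.image (fun a => (a.1, (f a).1)), ⟨?_, ?_, ?_⟩, ?_⟩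
  · intro e he
    obtain ⟨a, _, rfl⟩ := mem_image.1 he
    exact hE a
  · intro a0
    rw [Finset.card_le_one]
    rintro e1 he1 e2 he2
    obtain ⟨a1, _, rfl⟩ := mem_image.1 (mem_filter.1 he1).1
    obtain ⟨a2, _, rfl⟩ := mem_image.1 (mem_filter.1 he2).1
    have h1 := (mem_filter.1 he1).2
    have h2 := (mem_filter.1 he2).2
    have : a1 = a2 := Subtype.ext (by simp only at h1 h2; rw [h1, h2])
    rw [this]
  · intro c
    rw [Finset.filter_image]
    refine le_trans (Finset.card_image_le) ?_
    have : (I.attach.filter (fun a => (f a).1 = c)).card ≤ (Finset.range (b c)).card := by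
      refine Finset.card_le_card_of_injOn (fun a => (f a).2) ?_ ?_
      · intro a ha
        have h1 := (mem_filter.1 ha).2
        have h2 := (hfprop a).2
        rw [h1] at h2
        exact mem_range.2 h2
      · intro a1 h1 a2 h2 heq
        have hc1 := (mem_filter.1 h1).2
        have hc2 := (mem_filter.1 h2).2
        exact finj (Prod.ext (hc1.trans hc2.symm) heq)
    simpa using this
  · ext a
    constructor
    · intro ha
      obtain ⟨e, he, rfl⟩ := mem_image.1 ha
      obtain ⟨p, _, rfl⟩ := mem_image.1 he
      exact p.2
    · intro ha
      exact mem_image.2 ⟨(a, (f ⟨a, ha⟩).1),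
        mem_image.2 ⟨⟨a, ha⟩, mem_attach _ _, rfl⟩, rfl⟩

/-- Submodularity of the capacity function. -/
lemma cap_union_inter_le (E : Finset (A × C)) (b : C → ℕ) (S1 S2 : Finset A) :
    cap E b (S1 ∪ S2) + cap E b (S1 ∩ S2) ≤ cap E b S1 + cap E b S2 := by
  have hU : (S1 ∪ S2).biUnion (nbr E b) = S1.biUnion (nbr E b) ∪ S2.biUnion (nbr E b) := by
    ext c
    simp only [mem_biUnion, mem_union]
    constructor
    · rintro ⟨a, ha | ha, hc⟩
      · exact Or.inl ⟨a, ha, hc⟩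
      · exact Or.inr ⟨a, ha, hc⟩
    · rintro (⟨a, ha, hc⟩ | ⟨a, ha, hc⟩)
      · exact ⟨a, Or.inl ha, hc⟩
      · exact ⟨a, Or.inr ha, hc⟩
  set U := S1.biUnion (nbr E b)
  set V := S2.biUnion (nbr E b)
  have hI : (S1 ∩ S2).biUnion (nbr E b) ⊆ U ∩ V := by
    intro c hc
    obtain ⟨a, ha, hca⟩ := mem_biUnion.1 hc
    exact mem_inter.2 ⟨mem_biUnion.2 ⟨a, (mem_inter.1 ha).1, hca⟩,
      mem_biUnion.2 ⟨a, (mem_inter.1 ha).2, hca⟩⟩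
  have e1 : ∑ c ∈ U ∪ V, b c + ∑ c ∈ U ∩ V, b c = ∑ c ∈ U, b c + ∑ c ∈ V, b c :=
    Finset.sum_union_inter
  have e2 : cap E b (S1 ∩ S2) ≤ ∑ c ∈ U ∩ V, b c := Finset.sum_le_sum_of_subset hI
  have e3 : cap E b (S1 ∪ S2) = ∑ c ∈ U ∪ V, b c := by rw [cap, hU]
  have e4 : cap E b S1 = ∑ c ∈ U, b c := rfl
  have e5 : cap E b S2 = ∑ c ∈ V, b c := rfl
  omega

/-- The exchange property: independent sets form a matroid. -/
lemma exchange {E : Finset (A × C)} {b : C → ℕ} {I J : Finset A}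
    (hI : Ind E b I) (hJ : Ind E b J) (hc : I.card < J.card) :
    ∃ x ∈ J, x ∉ I ∧ Ind E b (insert x I) := by
  by_contra hcon
  push_neg at hcon
  -- for each x ∈ J \ I extract a tight set covering the neighbourhood of x
  have key : ∀ x ∈ J \ I, ∃ S ⊆ I, cap E b S = S.card ∧
      nbr E b x ⊆ S.biUnion (nbr E b) := by
    intro x hx
    have hxJ := (mem_sdiff.1 hx).1
    have hxI := (mem_sdiff.1 hx).2
    have hni : ¬ Ind E b (insert x I) := hcon x hxJ hxI
    have : ∃ T ⊆ insert x I, cap E b T < T.card := by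
      by_contra hcon2
      push_neg at hcon2
      exact hni (ind_of_hall (fun T hT => hcon2 T hT))
    obtain ⟨T, hT, hTlt⟩ := this
    have hxT : x ∈ T := by
      by_contra hxT
      have hTI : T ⊆ I := fun a ha => by
        rcases mem_insert.1 (hT ha) with rfl | h
        · exact absurd ha hxT
        · exact h
      exact absurd (card_le_cap hI hTI) (by omega)
    set S := T.erase x with hS
    have hSI : S ⊆ I := by
      intro a ha
      have := mem_erase.1 ha
      rcases mem_insert.1 (hT this.2) with rfl | h
      · exact absurd rfl this.1
      · exact h
    have hScard : S.card = T.card - 1 := Finset.card_erase_of_mem hxT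
    have hcapS_ge : S.card ≤ cap E b S := card_le_cap hI hSI
    have hcapS_le : cap E b S ≤ cap E b T :=
      Finset.sum_le_sum_of_subset (Finset.biUnion_subset_biUnion_of_subset_left _ (erase_subset _ _))
    have hTpos : 0 < T.card := Finset.card_pos.2 ⟨x, hxT⟩
    have htight : cap E b S = S.card := by omega
    have hcapTS : cap E b T = cap E b S := by omega
    refine ⟨S, hSI, htight, ?_⟩
    -- T = insert x S, so the neighbourhoods satisfy N(T) = N(S) ∪ nbr x
    have hTins : T = insert x S := (Finset.insert_erase hxT).symm
    have hNT : T.biUnion (nbr E b) = nbr E b x ∪ S.biUnion (nbr E b) := by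
      rw [hTins, Finset.biUnion_insert]
    -- sum over the extra part is 0, and nbr x only has positive capacities
    intro c hc
    by_contra hcS
    have hcT : c ∈ T.biUnion (nbr E b) := hNT ▸ mem_union_left _ hc
    have hpos : 0 < b c := (mem_filter.1 hc).2
    have : cap E b S < cap E b T := by
      rw [cap, cap]
      have hsub : S.biUnion (nbr E b) ⊆ T.biUnion (nbr E b) :=
        Finset.biUnion_subset_biUnion_of_subset_left _ (hTins ▸ subset_insert _ _)
      refine Finset.sum_lt_sum_of_subset hsub hcT hcS hpos (fun _ _ _ => Nat.zero_le _)
    omega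
  -- union of the tight sets
  have main : ∀ D : Finset A, D ⊆ J \ I → ∃ S ⊆ I, cap E b S = S.card ∧
      ∀ x ∈ D, nbr E b x ⊆ S.biUnion (nbr E b) := by
    intro D
    induction D using Finset.induction_on with
    | empty =>
      intro _
      refine ⟨∅, empty_subset _, ?_, by simp⟩
      simp [cap]
    | insert x D hnotmem ih =>
      intro hD
      obtain ⟨S1, hS1I, hS1t, hS1cov⟩ := ih ((subset_insert _ _).trans hD)
      obtain ⟨S2, hS2I, hS2t, hS2cov⟩ := key x (hD (mem_insert_self _ _))
      refine ⟨S1 ∪ S2, union_subset hS1I hS2I, ?_, ?_⟩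
      · have h1 := cap_union_inter_le E b S1 S2
        have h2 : (S1 ∩ S2).card ≤ cap E b (S1 ∩ S2) :=
          card_le_cap hI ((inter_subset_left).trans hS1I)
        have h3 : (S1 ∪ S2).card ≤ cap E b (S1 ∪ S2) :=
          card_le_cap hI (union_subset hS1I hS2I)
        have h4 := Finset.card_union_add_card_inter S1 S2
        omega
      · intro y hy
        rcases mem_insert.1 hy with rfl | hyD
        · exact hS2cov.trans
            (Finset.biUnion_subset_biUnion_of_subset_left _ subset_union_right)
        · exact (hS1cov y hyD).trans
            (Finset.biUnion_subset_biUnion_of_subset_left _ subset_union_left)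
  obtain ⟨S, hSI, hStight, hScov⟩ := main (J \ I) Subset.rfl
  -- the violating set T ⊆ J
  set T := (J \ I) ∪ (S ∩ J) with hT
  have hTJ : T ⊆ J := union_subset sdiff_subset inter_subset_right
  have hNTS : T.biUnion (nbr E b) ⊆ S.biUnion (nbr E b) := by
    intro c hc
    obtain ⟨a, ha, hca⟩ := mem_biUnion.1 hc
    rcases mem_union.1 ha with h | h
    · exact hScov a h hca
    · exact mem_biUnion.2 ⟨a, (mem_inter.1 h).1, hca⟩
  have hcapT : cap E b T ≤ cap E b S := Finset.sum_le_sum_of_subset hNTS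
  have hdisj : Disjoint (J \ I) (S ∩ J) := by
    rw [Finset.disjoint_left]
    intro a ha haS
    exact (mem_sdiff.1 ha).2 (hSI (mem_inter.1 haS).1)
  have hTcard : T.card = (J \ I).card + (S ∩ J).card := card_union_of_disjoint hdisj
  have hScard : (S \ J).card + (S ∩ J).card = S.card := Finset.card_sdiff_add_card_inter S J
  have hIJ : (I \ J).card < (J \ I).card := by
    have h1 := Finset.card_sdiff_add_card_inter I J
    have h2 := Finset.card_sdiff_add_card_inter J I
    have h3 : (I ∩ J).card = (J ∩ I).card := by rw [inter_comm]
    omega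
  have hSJ : (S \ J).card ≤ (I \ J).card := card_le_card (sdiff_subset_sdiff hSI Subset.rfl)
  have := card_le_cap hJ hTJ
  omega

/-- Augment an independent set to the size of a larger one. -/
lemma grow {E : Finset (A × C)} {b : C → ℕ} {Y : Finset A} (hY : Ind E b Y) :
    ∀ (k : ℕ) (I : Finset A), Ind E b I → I.card + k = Y.card →
      ∃ I', Ind E b I' ∧ I ⊆ I' ∧ I' ⊆ I ∪ Y ∧ I'.card = Y.card := by
  intro k
  induction k with
  | zero =>
    intro I hI hcard
    exact ⟨I, hI, Subset.rfl, subset_union_left, by omega⟩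
  | succ k ih =>
    intro I hI hcard
    have hlt : I.card < Y.card := by omega
    obtain ⟨z, hzY, hzI, hins⟩ := exchange hI hY hlt
    have hcard' : (insert z I).card + k = Y.card := by
      rw [Finset.card_insert_of_notMem hzI]; omega
    obtain ⟨I', hI', hsub1, hsub2, hcardI'⟩ := ih (insert z I) hins hcard'
    refine ⟨I', hI', (subset_insert _ _).trans hsub1, ?_, hcardI'⟩
    refine hsub2.trans ?_
    intro a ha
    rcases mem_union.1 ha with h | h
    · rcases mem_insert.1 h with rfl | h'
      · exact mem_union_right _ hzY
      · exact mem_union_left _ h'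
    · exact mem_union_right _ h

end PriorityInj

open PriorityInj Finset in
/-- Day `d_i` of the online algorithm: edge weights are agent-determined,
`w (a, c) = α a · δ^(i-1)` with `α a > 0` and `δ ∈ (0,1)`.  Let `M` be a
maximum-weight b-matching of size at most `s` in `H_i` and `N` any
b-matching in `H_i`, with `X`, `Y` the agent sets matched by `N`, `M`
respectively and `|X| ≤ |Y|`.  Then there is an injection `f : X → Y` with
`α p ≤ α (f p)` for all `p ∈ X`. -/
theorem exists_priority_injection {A C : Type*} [DecidableEq A] [DecidableEq C]
    (E M N : Finset (A × C)) (b : C → ℕ) (s : ℕ) (α : A → ℝ) (δ : ℝ) (i : ℕ)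
    (hα : ∀ a, 0 < α a) (hδ0 : 0 < δ) (hδ1 : δ < 1)
    (hM : IsBMatching E M b) (hMs : M.card ≤ s)
    (hmaxW : ∀ M', IsBMatching E M' b → M'.card ≤ s →
      (∑ e ∈ M', α e.1 * δ ^ (i - 1)) ≤ ∑ e ∈ M, α e.1 * δ ^ (i - 1))
    (hN : IsBMatching E N b)
    (hXY : (N.image Prod.fst).card ≤ (M.image Prod.fst).card) :
    ∃ f : A → A, Set.InjOn f ↑(N.image Prod.fst) ∧
      ∀ p ∈ N.image Prod.fst, f p ∈ M.image Prod.fst ∧ α p ≤ α (f p) := by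
  classical
  set X := N.image Prod.fst with hX
  set Y := M.image Prod.fst with hY
  set g : A → ℝ := fun a => α a * δ ^ (i - 1) with hg
  have hδp : (0 : ℝ) < δ ^ (i - 1) := pow_pos hδ0 _
  have hIndX : Ind E b X := ⟨N, hN, rfl⟩
  have hIndY : Ind E b Y := ⟨M, hM, rfl⟩
  -- the key counting lemma
  have count : ∀ t : ℝ,
      (X.filter (fun p => t ≤ α p)).card ≤ (Y.filter (fun p => t ≤ α p)).card := by
    intro t
    by_contra hcnt
    push_neg at hcnt
    set Xt := X.filter (fun p => t ≤ α p) with hXt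
    set Yt := Y.filter (fun p => t ≤ α p) with hYt
    have hIndXt : Ind E b Xt := hIndX.subset (filter_subset _ _)
    have hIndYt : Ind E b Yt := hIndY.subset (filter_subset _ _)
    obtain ⟨x, hxXt, hxYt, hxins⟩ := exchange hIndYt hIndXt hcnt
    have hxX : x ∈ X := (mem_filter.1 hxXt).1
    have htx : t ≤ α x := (mem_filter.1 hxXt).2
    have hxY : x ∉ Y := fun h => hxYt (mem_filter.2 ⟨h, htx⟩)
    -- grow `insert x Yt` to size |Y|
    have hYtY : Yt ⊆ Y := filter_subset _ _
    have hle : (insert x Yt).card ≤ Y.card := by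
      rw [Finset.card_insert_of_notMem hxYt]
      have h1 : Xt.card ≤ X.card := card_le_card (filter_subset _ _)
      omega
    obtain ⟨I', hIndI', hsub1, hsub2, hcardI'⟩ :=
      grow hIndY (Y.card - (insert x Yt).card) (insert x Yt) hxins (by omega)
    have hxI' : x ∈ I' := hsub1 (mem_insert_self _ _)
    have hYtI' : Yt ⊆ I' := fun a ha => hsub1 (mem_insert_of_mem ha)
    have hI'sub : I' ⊆ insert x Y := by
      refine hsub2.trans ?_
      intro a ha
      rcases mem_union.1 ha with h | h
      · rcases mem_insert.1 h with rfl | h'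
        · exact mem_insert_self _ _
        · exact mem_insert_of_mem (hYtY h')
      · exact mem_insert_of_mem h
    -- I' = insert x (Y.erase y) for a unique y ∉ Yt
    have hIex : I'.erase x ⊆ Y := by
      intro a ha
      have h1 := mem_erase.1 ha
      rcases mem_insert.1 (hI'sub h1.2) with rfl | h
      · exact absurd rfl h1.1
      · exact h
    have hIexcard : (I'.erase x).card = Y.card - 1 := by
      rw [Finset.card_erase_of_mem hxI', hcardI']
    have hYpos : 0 < Y.card := by
      have : 0 < I'.card := Finset.card_pos.2 ⟨x, hxI'⟩
      omega
    obtain ⟨y, hyD⟩ : ∃ y, Y \ I'.erase x = {y} := by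
      refine Finset.card_eq_one.1 ?_
      have := Finset.card_sdiff_of_subset (hIex)
      omega
    have hyY : y ∈ Y := by
      have : y ∈ Y \ I'.erase x := hyD ▸ mem_singleton_self y
      exact (mem_sdiff.1 this).1
    have hyne : y ∉ I'.erase x := by
      have : y ∈ Y \ I'.erase x := hyD ▸ mem_singleton_self y
      exact (mem_sdiff.1 this).2
    have herase : I'.erase x = Y.erase y := by
      apply Finset.eq_of_subset_of_card_le
      · intro a ha
        refine mem_erase.2 ⟨?_, hIex ha⟩
        rintro rfl
        exact hyne ha
      · rw [Finset.card_erase_of_mem hyY, hIexcard]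
    have hyI' : y ∉ I' := by
      intro hy
      have hyx : y ≠ x := by rintro rfl; exact hxY hyY
      exact hyne (mem_erase.2 ⟨hyx, hy⟩)
    have hyYt : y ∉ Yt := fun h => hyI' (hYtI' h)
    have hty : α y < t := by
      by_contra hh
      push_neg at hh
      exact hyYt (mem_filter.2 ⟨hyY, hh⟩)
    -- the matching realizing I' is strictly heavier than M; contradiction
    obtain ⟨M'', hM'', himg⟩ := hIndI'
    have hYM : Y.card = M.card := card_agents hM
    have hcardM'' : M''.card ≤ s := by
      have hMI : (M''.image Prod.fst).card = M''.card := card_agents hM''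
      rw [himg] at hMI
      omega
    have hwle := hmaxW M'' hM'' hcardM''
    have hsum1 : ∑ e ∈ M'', g e.1 = ∑ a ∈ I', g a := by rw [← himg, sum_agents hM'']
    have hsum2 : ∑ e ∈ M, g e.1 = ∑ a ∈ Y, g a := by rw [hY, sum_agents hM]
    have hI'ins : I' = insert x (Y.erase y) := by
      rw [← herase, Finset.insert_erase hxI']
    have hsumI' : ∑ a ∈ I', g a = g x + ∑ a ∈ Y.erase y, g a := by
      rw [hI'ins, Finset.sum_insert (by rw [herase] at *; exact fun h => hxY (erase_subset _ _ h))]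
    have hsumY : ∑ a ∈ Y, g a = g y + ∑ a ∈ Y.erase y, g a := by
      rw [Finset.add_sum_erase _ _ hyY]
    have hgxy : g y < g x := by
      have : α y < α x := lt_of_lt_of_le hty htx
      exact mul_lt_mul_of_pos_right this hδp
    rw [hsum1, hsum2, hsumI', hsumY] at hwle
    linarith
  -- Hall's theorem for the threshold relation
  set t : {a // a ∈ X} → Finset A := fun p => Y.filter (fun q => α p.1 ≤ α q) with htdef
  have hall : ∀ s : Finset {a // a ∈ X}, s.card ≤ (s.biUnion t).card := by
    intro s
    rcases s.eq_empty_or_nonempty with rfl | hne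
    · simp
    obtain ⟨p₀, hp₀, hmin⟩ := Finset.exists_min_image s (fun p => α p.1) hne
    have h1 : s.image Subtype.val ⊆ X.filter (fun q => α p₀.1 ≤ α q) := by
      intro a ha
      obtain ⟨p, hp, rfl⟩ := mem_image.1 ha
      exact mem_filter.2 ⟨p.2, hmin p hp⟩
    have h2 : t p₀ ⊆ s.biUnion t := Finset.subset_biUnion_of_mem t hp₀
    calc s.card = (s.image Subtype.val).card :=
          (Finset.card_image_of_injective _ Subtype.val_injective).symm
      _ ≤ (X.filter (fun q => α p₀.1 ≤ α q)).card := card_le_card h1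
      _ ≤ (Y.filter (fun q => α p₀.1 ≤ α q)).card := count _
      _ ≤ (s.biUnion t).card := card_le_card h2
  obtain ⟨f₀, f₀inj, hf₀⟩ := (Finset.all_card_le_biUnion_card_iff_exists_injective t).1 hall
  refine ⟨fun a => if h : a ∈ X then f₀ ⟨a, h⟩ else a, ?_, ?_⟩
  · intro p hp q hq heq
    have hpX : p ∈ X := by exact_mod_cast hp
    have hqX : q ∈ X := by exact_mod_cast hq
    have h1 : (if h : p ∈ X then f₀ ⟨p, h⟩ else p) = f₀ ⟨p, hpX⟩ := dif_pos hpX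
    have h2 : (if h : q ∈ X then f₀ ⟨q, h⟩ else q) = f₀ ⟨q, hqX⟩ := dif_pos hqX
    have heq' : f₀ ⟨p, hpX⟩ = f₀ ⟨q, hqX⟩ := by
      rw [← h1, ← h2]
      exact heq
    exact congrArg Subtype.val (f₀inj heq')
  · intro p hp
    have h1 : (if h : p ∈ X then f₀ ⟨p, h⟩ else p) = f₀ ⟨p, hp⟩ := dif_pos hp
    have h2 := hf₀ ⟨p, hp⟩
    constructor
    · show (if h : p ∈ X then f₀ ⟨p, h⟩ else p) ∈ Y
      rw [h1]
      exact (mem_filter.1 h2).1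
    · show α p ≤ α (if h : p ∈ X then f₀ ⟨p, h⟩ else p)
      rw [h1]
      exact (mem_filter.1 h2).2
end

section
/- If a category c_k is an endpoint of an alternating path in M_i ⊕ N_i with strictly more N_i-edges than M_i-edges incident to it, the online algorithm for Model 2 runs with supply slack |M_i| < s_i, and M_i is a maximum-size b-matching under the capacities b_{i,k} = min(q_{i,k}, remaining overall quota), then category c_k must have exhausted its overall quota q_k in the online algorithm on or before day d_i. -/
/-- An alternating path in `M ⊕ N`, starting at an agent unmatched in `M`,
alternating between edges of `N \ M` and edges of `M \ N`, and ending at the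
category `c (Fin.last k)` with an `N`-edge.  (It would be `M`-augmenting if
its terminal category had spare capacity.) -/
structure PreAugPath {A C : Type*} [DecidableEq A] [DecidableEq C]
    (E M N : Finset (A × C)) where
  k : ℕ
  a : Fin (k + 1) → A
  c : Fin (k + 1) → C
  injA : Function.Injective a
  injC : Function.Injective c
  nEdge : ∀ i, (a i, c i) ∈ E ∧ (a i, c i) ∈ N ∧ (a i, c i) ∉ M
  mEdge : ∀ i : Fin k, (a i.succ, c i.castSucc) ∈ M ∧ (a i.succ, c i.castSucc) ∉ N
  startFree : ∀ e ∈ M, e.1 ≠ a 0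

/-- Model 2, day `d_i`: the online b-matching `M` is maximum-size subject to
size cap `s` (with supply slack `|M| < s`) under category capacities
`cap c = min (qd c) (q c - used c)` — the minimum of the daily quota and the
remaining overall quota.  If the category `ck` is the endpoint of an
alternating path in `M ⊕ N` and has strictly more `N`-edges than `M`-edges
incident to it (where the day-`i` optimal matching `N` respects the daily
quotas), then `ck` has exhausted its overall quota `q ck` on or before day
`d_i`: the previously used units plus today's `M`-allocations equal `q ck`. -/
theorem overall_quota_exhausted {A C : Type*} [DecidableEq A] [DecidableEq C]
    (E M N : Finset (A × C)) (qd q used : C → ℕ) (s : ℕ)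
    (cap : C → ℕ) (hcap : ∀ c, cap c = min (qd c) (q c - used c))
    (hused : ∀ c, used c ≤ q c)
    (hM : IsBMatching E M cap) (hMs : M.card < s)
    (hmax : ∀ M', IsBMatching E M' cap → M'.card ≤ s → M'.card ≤ M.card)
    (hNE : N ⊆ E)
    (hNagent : ∀ a : A, (N.filter (fun e => e.1 = a)).card ≤ 1)
    (hNdaily : ∀ c : C, (N.filter (fun e => e.2 = c)).card ≤ qd c)
    (ρ : PreAugPath E M N) (ck : C) (hck : ck = ρ.c (Fin.last ρ.k))
    (hdeg : (M.filter (fun e => e.2 = ck)).card < (N.filter (fun e => e.2 = ck)).card) :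
    used ck + (M.filter (fun e => e.2 = ck)).card = q ck := by
  classical
  obtain ⟨hME, hMagent, hMcat⟩ := hM
  have key : ¬ (M.filter (fun e => e.2 = ck)).card < cap ck := by
    intro hlt
    obtain ⟨k, a, c, injA, injC, nEdge, mEdge, startFree⟩ := ρ
    simp only at hck hlt hdeg
    subst hck
    set P : Finset (A × C) := Finset.univ.image (fun i : Fin (k+1) => (a i, c i)) with hPdef
    set Q : Finset (A × C) := Finset.univ.image (fun i : Fin k => (a i.succ, c i.castSucc)) with hQdef
    have hQM : Q ⊆ M := by
      intro e he
      simp only [hQdef, Finset.mem_image, Finset.mem_univ, true_and] at he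
      obtain ⟨i, rfl⟩ := he
      exact (mEdge i).1
    have hPnotM : ∀ e ∈ P, e ∉ M := by
      intro e he
      simp only [hPdef, Finset.mem_image, Finset.mem_univ, true_and] at he
      obtain ⟨i, rfl⟩ := he
      exact (nEdge i).2.2
    have cardQ : Q.card = k := by
      rw [hQdef, Finset.card_image_of_injective _ ?_, Finset.card_univ, Fintype.card_fin]
      intro i j h
      exact Fin.castSucc_injective _ (injC (congrArg Prod.snd h))
    have cardP : P.card = k + 1 := by
      rw [hPdef, Finset.card_image_of_injective _ ?_, Finset.card_univ, Fintype.card_fin]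
      intro i j h
      exact injC (congrArg Prod.snd h)
    set M' : Finset (A × C) := (M \ Q) ∪ P with hM'def
    have cardM' : M'.card = M.card + 1 := by
      have hdisj : Disjoint (M \ Q) P := by
        rw [Finset.disjoint_right]
        intro e he hem
        exact hPnotM e he (Finset.mem_sdiff.mp hem).1
      have hkM : k ≤ M.card := cardQ ▸ Finset.card_le_card hQM
      rw [hM'def, Finset.card_union_of_disjoint hdisj, Finset.card_sdiff_of_subset hQM, cardQ, cardP]
      omega
    have hM'E : M' ⊆ E := by
      intro e he
      rcases Finset.mem_union.mp he with h | h
      · exact hME (Finset.mem_sdiff.mp h).1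
      · simp only [hPdef, Finset.mem_image, Finset.mem_univ, true_and] at h
        obtain ⟨i, rfl⟩ := h
        exact (nEdge i).1
    have hM'agent : ∀ x : A, (M'.filter (fun e => e.1 = x)).card ≤ 1 := by
      intro x
      by_cases hx : ∃ j, a j = x
      · obtain ⟨j, rfl⟩ := hx
        have hsub : M'.filter (fun e => e.1 = a j) ⊆ {(a j, c j)} := by
          intro e he
          obtain ⟨heM', he1⟩ := Finset.mem_filter.mp he
          rcases Finset.mem_union.mp heM' with h | h
          · exfalso
            obtain ⟨heM, heQ⟩ := Finset.mem_sdiff.mp h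
            rcases Fin.eq_zero_or_eq_succ j with rfl | ⟨i, rfl⟩
            · exact startFree e heM he1
            · have hm : (a i.succ, c i.castSucc) ∈ M := (mEdge i).1
              have hee : e = (a i.succ, c i.castSucc) := by
                by_contra hne
                have hsub2 : ({e, (a i.succ, c i.castSucc)} : Finset (A × C)) ⊆
                    M.filter (fun e => e.1 = a i.succ) := by
                  intro y hy
                  rcases Finset.mem_insert.mp hy with rfl | hy
                  · exact Finset.mem_filter.mpr ⟨heM, he1⟩
                  · rw [Finset.mem_singleton] at hy
                    subst hy
                    exact Finset.mem_filter.mpr ⟨hm, rfl⟩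
                have hc := Finset.card_le_card hsub2
                rw [Finset.card_insert_of_notMem (by simpa using hne),
                  Finset.card_singleton] at hc
                have := hMagent (a i.succ)
                omega
              apply heQ
              rw [hee]
              simp only [hQdef, Finset.mem_image, Finset.mem_univ, true_and]
              exact ⟨i, rfl⟩
          · simp only [hPdef, Finset.mem_image, Finset.mem_univ, true_and] at h
            obtain ⟨i, rfl⟩ := h
            have : i = j := injA he1
            subst this
            simp
        calc (M'.filter (fun e => e.1 = a j)).card
            ≤ ({(a j, c j)} : Finset (A × C)).card := Finset.card_le_card hsub
          _ = 1 := Finset.card_singleton _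
      · have hsub : M'.filter (fun e => e.1 = x) ⊆ M.filter (fun e => e.1 = x) := by
          intro e he
          obtain ⟨heM', he1⟩ := Finset.mem_filter.mp he
          rcases Finset.mem_union.mp heM' with h | h
          · exact Finset.mem_filter.mpr ⟨(Finset.mem_sdiff.mp h).1, he1⟩
          · exfalso
            simp only [hPdef, Finset.mem_image, Finset.mem_univ, true_and] at h
            obtain ⟨i, rfl⟩ := h
            exact hx ⟨i, he1⟩
        exact le_trans (Finset.card_le_card hsub) (hMagent x)
    have hM'cat : ∀ x : C, (M'.filter (fun e => e.2 = x)).card ≤ cap x := by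
      intro x
      have hPsub : ∀ j : Fin (k+1), P.filter (fun e => e.2 = c j) ⊆ {(a j, c j)} := by
        intro j e he
        obtain ⟨heP, he2⟩ := Finset.mem_filter.mp he
        simp only [hPdef, Finset.mem_image, Finset.mem_univ, true_and] at heP
        obtain ⟨i, rfl⟩ := heP
        have : i = j := injC he2
        subst this
        simp
      by_cases hx : ∃ j, c j = x
      · obtain ⟨j, rfl⟩ := hx
        have hsplit : M'.filter (fun e => e.2 = c j) ⊆
            ((M \ Q).filter (fun e => e.2 = c j)) ∪ {(a j, c j)} := by
          intro e he
          obtain ⟨heM', he2⟩ := Finset.mem_filter.mp he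
          rcases Finset.mem_union.mp heM' with h | h
          · exact Finset.mem_union_left _ (Finset.mem_filter.mpr ⟨h, he2⟩)
          · exact Finset.mem_union_right _ (hPsub j (Finset.mem_filter.mpr ⟨h, he2⟩))
        have hcard1 : (M'.filter (fun e => e.2 = c j)).card ≤
            ((M \ Q).filter (fun e => e.2 = c j)).card + 1 := by
          calc (M'.filter (fun e => e.2 = c j)).card
              ≤ (((M \ Q).filter (fun e => e.2 = c j)) ∪ {(a j, c j)}).card :=
                Finset.card_le_card hsplit
            _ ≤ ((M \ Q).filter (fun e => e.2 = c j)).card + 1 := by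
                apply le_trans (Finset.card_union_le _ _)
                simp
        rcases Fin.eq_castSucc_or_eq_last j with ⟨i, rfl⟩ | rfl
        · -- interior category: one M-edge removed, one added
          set m : A × C := (a i.succ, c i.castSucc) with hmdef
          have hmM : m ∈ M.filter (fun e => e.2 = c i.castSucc) :=
            Finset.mem_filter.mpr ⟨(mEdge i).1, rfl⟩
          have hsub2 : (M \ Q).filter (fun e => e.2 = c i.castSucc) ⊆
              (M.filter (fun e => e.2 = c i.castSucc)).erase m := by
            intro e he
            obtain ⟨heMQ, he2⟩ := Finset.mem_filter.mp he
            obtain ⟨heM, heQ⟩ := Finset.mem_sdiff.mp heMQ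
            refine Finset.mem_erase.mpr ⟨?_, Finset.mem_filter.mpr ⟨heM, he2⟩⟩
            intro h
            apply heQ
            rw [h, hmdef]
            simp only [hQdef, Finset.mem_image, Finset.mem_univ, true_and]
            exact ⟨i, rfl⟩
          have hc2 := Finset.card_le_card hsub2
          rw [Finset.card_erase_of_mem hmM] at hc2
          have hpos : 1 ≤ (M.filter (fun e => e.2 = c i.castSucc)).card :=
            Finset.card_pos.mpr ⟨m, hmM⟩
          have := hMcat (c i.castSucc)
          omega
        · -- terminal category: use slack hlt
          have hsub3 : (M \ Q).filter (fun e => e.2 = c (Fin.last k)) ⊆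
              M.filter (fun e => e.2 = c (Fin.last k)) := by
            intro e he
            obtain ⟨heMQ, he2⟩ := Finset.mem_filter.mp he
            exact Finset.mem_filter.mpr ⟨(Finset.mem_sdiff.mp heMQ).1, he2⟩
          have hc3 := Finset.card_le_card hsub3
          omega
      · have hsub : M'.filter (fun e => e.2 = x) ⊆ M.filter (fun e => e.2 = x) := by
          intro e he
          obtain ⟨heM', he2⟩ := Finset.mem_filter.mp he
          rcases Finset.mem_union.mp heM' with h | h
          · exact Finset.mem_filter.mpr ⟨(Finset.mem_sdiff.mp h).1, he2⟩
          · exfalso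
            simp only [hPdef, Finset.mem_image, Finset.mem_univ, true_and] at h
            obtain ⟨i, rfl⟩ := h
            exact hx ⟨i, he2⟩
        exact le_trans (Finset.card_le_card hsub) (hMcat x)
    have hle := hmax M' ⟨hM'E, hM'agent, hM'cat⟩ (by omega)
    omega
  have hdMcap : (M.filter (fun e => e.2 = ck)).card = cap ck :=
    le_antisymm (hMcat ck) (not_lt.mp key)
  have hqd := hNdaily ck
  have h1 : (M.filter (fun e => e.2 = ck)).card < qd ck := lt_of_lt_of_le hdeg hqd
  have hcapck := hcap ck
  have husedk := hused ck
  rcases le_total (qd ck) (q ck - used ck) with h | h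
  · rw [min_eq_left h] at hcapck
    omega
  · rw [min_eq_right h] at hcapck
    omega
end
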